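/- If G is an unweighted undirected graph with girth greater than t+1, then the only t-spanner of G is G itself. -/

import Mathlib

/-- If `G` has girth greater than `t + 1`, then the only `t`-spanner of `G` is `G` itself. -/
theorem spanner_of_large_girth {V : Type*} (G S : SimpleGraph V) (hS : S ≤ G) (t : ℕ)
    (ht : 1 ≤ t) (hgirth : ((t : ℕ∞) + 1) < G.girth)
    (hspanner : ∀ u v : V, S.edist u v ≤ (t : ℕ∞) * G.edist u v) :
    S = G := by
  classical
  ext u v
  refine ⟨fun h => hS h, fun hadj => ?_⟩
  by_contra hnadj
  have h1 : G.edist u v = 1 := SimpleGraph.edist_eq_one_iff_adj.mpr hadj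
  have hle : S.edist u v ≤ (t : ℕ∞) := by
    have := hspanner u v
    rwa [h1, mul_one] at this
  have hne : S.edist u v ≠ ⊤ := fun h => by simp [h] at hle
  obtain ⟨p, hp⟩ := SimpleGraph.exists_walk_of_edist_ne_top hne
  have hplen : (p.length : ℕ∞) ≤ (t : ℕ∞) := hp ▸ hle
  have hplen' : p.length ≤ t := by exact_mod_cast hplen
  set q := p.bypass with hq
  have hqpath : q.IsPath := p.bypass_isPath
  have hqlen : q.length ≤ t := le_trans p.length_bypass_le hplen'
  set q' := q.mapLe hS with hq'
  have hq'path : q'.IsPath := hqpath.mapLe hS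
  have hnotmem : s(u, v) ∉ q'.edges := by
    intro hmem
    have hSedge : s(u, v) ∈ S.edgeSet := by
      have h2 : q'.edges = q.edges := by
        rw [hq', SimpleGraph.Walk.mapLe, SimpleGraph.Walk.edges_map]
        have h3 : Sym2.map (⇑(SimpleGraph.Hom.ofLE hS)) = id := by
          have : ⇑(SimpleGraph.Hom.ofLE hS) = id := rfl
          rw [this, Sym2.map_id]
        rw [h3, List.map_id]
      rw [h2] at hmem
      exact q.edges_subset_edgeSet hmem
    exact hnadj hSedge
  have hcycle : (SimpleGraph.Walk.cons hadj.symm q').IsCycle :=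
    (SimpleGraph.Walk.cons_isCycle_iff q' hadj.symm).mpr ⟨hq'path, by
      rwa [Sym2.eq_swap] at hnotmem⟩
  have hgle : G.egirth ≤ (SimpleGraph.Walk.cons hadj.symm q').length :=
    SimpleGraph.le_egirth.mp le_rfl _ _ hcycle
  have hgne : G.egirth ≠ ⊤ := by
    intro htop
    rw [htop] at hgle
    exact (ENat.coe_ne_top _) (top_le_iff.mp hgle)
  have hgeq : (G.girth : ℕ∞) = G.egirth := ENat.coe_toNat hgne
  have hkey : (G.girth : ℕ∞) ≤ ((q'.length + 1 : ℕ) : ℕ∞) := by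
    rw [hgeq]
    simpa using hgle
  have hlen' : q'.length = q.length := by
    simp [hq', SimpleGraph.Walk.mapLe]
  have hlt : ((t : ℕ∞) + 1) < ((q'.length + 1 : ℕ) : ℕ∞) := lt_of_lt_of_le hgirth hkey
  have hlt' : t + 1 < q'.length + 1 := by exact_mod_cast hlt
  omega
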